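/- Let q ≥ 2 be odd, let (P, L) be a finite projective plane of order q, and let O ⊆ P be an oval. Then every point Q ∈ P with Q ∉ O lies on exactly 0 or exactly 2 tangent lines of O. -/
import Mathlib


/-- A finite projective plane of order `q`, given by its set of lines (each line a
finite set of points of the ambient point type `P`): any two distinct points lie on
exactly one common line, any two distinct lines meet in exactly one point, there are
four points no three of which are collinear, and every line has `q + 1` points. -/
structure IsProjectivePlane (q : ℕ) {P : Type} [DecidableEq P] (L : Finset (Finset P)) : Prop where
  exists_unique_line : ∀ p₁ p₂ : P, p₁ ≠ p₂ → ∃! ℓ, ℓ ∈ L ∧ p₁ ∈ ℓ ∧ p₂ ∈ ℓ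
  exists_unique_point : ∀ ℓ₁ ∈ L, ∀ ℓ₂ ∈ L, ℓ₁ ≠ ℓ₂ → ∃! p, p ∈ ℓ₁ ∧ p ∈ ℓ₂
  nondeg : ∃ a b c d : P, a ≠ b ∧ a ≠ c ∧ a ≠ d ∧ b ≠ c ∧ b ≠ d ∧ c ≠ d ∧
      ∀ ℓ ∈ L, (ℓ ∩ ({a, b, c, d} : Finset P)).card ≤ 2
  card_line : ∀ ℓ ∈ L, ℓ.card = q + 1

/-- An oval: a set of `q + 1` points such that every line contains at most two of them. -/
def IsOval (q : ℕ) {P : Type} [DecidableEq P] (L : Finset (Finset P)) (O : Finset P) : Prop :=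
  O.card = q + 1 ∧ ∀ ℓ ∈ L, (ℓ ∩ O).card ≤ 2

section Aux

variable {q : ℕ} {P : Type} [DecidableEq P] {L : Finset (Finset P)}

lemma card_filter_eq_one {α : Type*} {s : Finset α} {p : α → Prop} [DecidablePred p]
    (h : ∃! a, a ∈ s ∧ p a) : (s.filter p).card = 1 := by
  obtain ⟨a, ⟨has, hpa⟩, hu⟩ := h
  rw [Finset.card_eq_one]
  refine ⟨a, ?_⟩
  ext b
  simp only [Finset.mem_filter, Finset.mem_singleton]
  constructor
  · rintro ⟨h1, h2⟩; exact hu b ⟨h1, h2⟩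
  · rintro rfl; exact ⟨has, hpa⟩

lemma inter_card_one {m n : Finset P} (h : ∃! z : P, z ∈ m ∧ z ∈ n) : (m ∩ n).card = 1 := by
  obtain ⟨a, ⟨ham, han⟩, hu⟩ := h
  rw [Finset.card_eq_one]
  refine ⟨a, ?_⟩
  ext b
  simp only [Finset.mem_inter, Finset.mem_singleton]
  constructor
  · rintro ⟨h1, h2⟩; exact hu b ⟨h1, h2⟩
  · rintro rfl; exact ⟨ham, han⟩

lemma line_unique (hL : IsProjectivePlane q L) {a b : P} (hab : a ≠ b)
    {ℓ₁ ℓ₂ : Finset P} (h₁ : ℓ₁ ∈ L) (ha₁ : a ∈ ℓ₁) (hb₁ : b ∈ ℓ₁)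
    (h₂ : ℓ₂ ∈ L) (ha₂ : a ∈ ℓ₂) (hb₂ : b ∈ ℓ₂) : ℓ₁ = ℓ₂ := by
  obtain ⟨ℓ, -, hu⟩ := hL.exists_unique_line a b hab
  rw [hu ℓ₁ ⟨h₁, ha₁, hb₁⟩, hu ℓ₂ ⟨h₂, ha₂, hb₂⟩]

lemma double_count (A : Finset (Finset P)) (O : Finset P) :
    ∑ ℓ ∈ A, (ℓ ∩ O).card = ∑ c ∈ O, (A.filter fun ℓ => c ∈ ℓ).card := by
  have h : ∀ ℓ : Finset P, (ℓ ∩ O).card = (O.filter (· ∈ ℓ)).card := by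
    intro ℓ; rw [Finset.filter_mem_eq_inter, Finset.inter_comm]
  simp_rw [h, Finset.card_filter]
  exact Finset.sum_comm

lemma three_le {x y z : P} {s : Finset P} (hxy : x ≠ y) (hxz : x ≠ z) (hyz : y ≠ z)
    (hx : x ∈ s) (hy : y ∈ s) (hz : z ∈ s) : 3 ≤ s.card := by
  have hsub : ({x, y, z} : Finset P) ⊆ s := by
    intro w hw
    simp only [Finset.mem_insert, Finset.mem_singleton] at hw
    rcases hw with rfl | rfl | rfl <;> assumption
  have h3 : ({x, y, z} : Finset P).card = 3 := by
    rw [Finset.card_insert_of_notMem (by simp [hxy, hxz]),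
      Finset.card_insert_of_notMem (by simp [hyz]), Finset.card_singleton]
  rw [← h3]
  exact Finset.card_le_card hsub

lemma exists_line_avoiding (hL : IsProjectivePlane q L) (p : P) :
    ∃ ℓ ∈ L, p ∉ ℓ := by
  obtain ⟨a, b, c, d, hab, hac, had, hbc, hbd, hcd, hquad⟩ := hL.nondeg
  obtain ⟨ℓab, ⟨hℓab, haab, hbab⟩, -⟩ := hL.exists_unique_line a b hab
  obtain ⟨ℓcd, ⟨hℓcd, hccd, hdcd⟩, -⟩ := hL.exists_unique_line c d hcd
  obtain ⟨ℓac, ⟨hℓac, haac, hcac⟩, -⟩ := hL.exists_unique_line a c hac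
  have mem_quad : ∀ x : P, x = a ∨ x = b ∨ x = c ∨ x = d →
      x ∈ ({a, b, c, d} : Finset P) := by
    intro x hx; simp only [Finset.mem_insert, Finset.mem_singleton]; tauto
  by_cases h1 : p ∈ ℓab
  · by_cases h2 : p ∈ ℓcd
    · refine ⟨ℓac, hℓac, fun h3 => ?_⟩
      by_cases hpa : p = a
      · have ha2 : a ∈ ℓcd := hpa ▸ h2
        have : (ℓcd ∩ ({a, b, c, d} : Finset P)).card ≤ 2 := hquad ℓcd hℓcd
        have h3le : 3 ≤ (ℓcd ∩ ({a, b, c, d} : Finset P)).card :=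
          three_le hac had hcd (Finset.mem_inter.mpr ⟨ha2, mem_quad _ (by tauto)⟩)
            (Finset.mem_inter.mpr ⟨hccd, mem_quad _ (by tauto)⟩)
            (Finset.mem_inter.mpr ⟨hdcd, mem_quad _ (by tauto)⟩)
        omega
      · have heq : ℓab = ℓac :=
          line_unique hL (fun h => hpa h.symm) hℓab haab h1 hℓac haac h3
        have : (ℓab ∩ ({a, b, c, d} : Finset P)).card ≤ 2 := hquad ℓab hℓab
        have h3le : 3 ≤ (ℓab ∩ ({a, b, c, d} : Finset P)).card :=
          three_le hab hac hbc (Finset.mem_inter.mpr ⟨haab, mem_quad _ (by tauto)⟩)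
            (Finset.mem_inter.mpr ⟨hbab, mem_quad _ (by tauto)⟩)
            (Finset.mem_inter.mpr ⟨heq ▸ hcac, mem_quad _ (by tauto)⟩)
        omega
    · exact ⟨ℓcd, hℓcd, h2⟩
  · exact ⟨ℓab, hℓab, h1⟩

lemma pencil_card (hL : IsProjectivePlane q L) (p : P) :
    (L.filter fun ℓ => p ∈ ℓ).card = q + 1 := by
  obtain ⟨ℓ₀, hℓ₀, hp₀⟩ := exists_line_avoiding hL p
  have key : ∀ m ∈ L.filter (fun ℓ => p ∈ ℓ), (m ∩ ℓ₀).card = 1 := by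
    intro m hm
    rw [Finset.mem_filter] at hm
    have hne : m ≠ ℓ₀ := fun h => hp₀ (h ▸ hm.2)
    exact inter_card_one (hL.exists_unique_point m hm.1 ℓ₀ hℓ₀ hne)
  have h1 : ∑ m ∈ L.filter (fun ℓ => p ∈ ℓ), (m ∩ ℓ₀).card
      = (L.filter fun ℓ => p ∈ ℓ).card := by
    rw [Finset.card_eq_sum_ones]
    exact Finset.sum_congr rfl key
  rw [← h1, double_count]
  have h2 : ∀ x ∈ ℓ₀, ((L.filter fun ℓ => p ∈ ℓ).filter fun ℓ => x ∈ ℓ).card = 1 := by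
    intro x hx
    have hpx : p ≠ x := fun h => hp₀ (h ▸ hx)
    rw [Finset.filter_filter]
    exact card_filter_eq_one (by
      obtain ⟨ℓ, hℓ, hu⟩ := hL.exists_unique_line p x hpx
      exact ⟨ℓ, ⟨hℓ.1, hℓ.2.1, hℓ.2.2⟩, fun m hm => hu m ⟨hm.1, hm.2.1, hm.2.2⟩⟩)
  rw [Finset.sum_congr rfl h2, Finset.sum_const, smul_eq_mul, mul_one,
    hL.card_line ℓ₀ hℓ₀]


variable {O : Finset P}

lemma sum_pencil_notMem (hL : IsProjectivePlane q L) (hO : IsOval q L O) {x : P}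
    (hx : x ∉ O) :
    ∑ ℓ ∈ L.filter (fun ℓ => x ∈ ℓ), (ℓ ∩ O).card = q + 1 := by
  rw [double_count]
  have h : ∀ c ∈ O, ((L.filter fun ℓ => x ∈ ℓ).filter fun ℓ => c ∈ ℓ).card = 1 := by
    intro c hc
    have hxc : x ≠ c := fun h => hx (h ▸ hc)
    rw [Finset.filter_filter]
    exact card_filter_eq_one (by
      obtain ⟨ℓ, hℓ, hu⟩ := hL.exists_unique_line x c hxc
      exact ⟨ℓ, ⟨hℓ.1, hℓ.2.1, hℓ.2.2⟩, fun m hm => hu m ⟨hm.1, hm.2.1, hm.2.2⟩⟩)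
  rw [Finset.sum_congr rfl h, Finset.sum_const, smul_eq_mul, mul_one, hO.1]

lemma tangents_even (hL : IsProjectivePlane q L) (hO : IsOval q L O) (hodd : Odd q)
    {x : P} (hx : x ∉ O) :
    (L.filter fun ℓ => x ∈ ℓ ∧ (ℓ ∩ O).card = 1).card % 2 = 0 := by
  have hsum := sum_pencil_notMem hL hO hx
  have hmod := Finset.sum_nat_mod (L.filter (fun ℓ => x ∈ ℓ)) 2 (fun ℓ => (ℓ ∩ O).card)
  have hterm : ∀ ℓ ∈ L.filter (fun ℓ => x ∈ ℓ),
      (ℓ ∩ O).card % 2 = if (ℓ ∩ O).card = 1 then 1 else 0 := by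
    intro ℓ hℓ
    have hle : (ℓ ∩ O).card ≤ 2 := hO.2 ℓ (Finset.mem_filter.mp hℓ).1
    split_ifs with h
    · rw [h]
    · omega
  rw [Finset.sum_congr rfl hterm, ← Finset.card_filter, Finset.filter_filter] at hmod
  have hq2 : q % 2 = 1 := Nat.odd_iff.mp hodd
  omega

lemma sum_pencil_mem (hL : IsProjectivePlane q L) (hO : IsOval q L O) {p : P}
    (hp : p ∈ O) :
    ∑ ℓ ∈ L.filter (fun ℓ => p ∈ ℓ), (ℓ ∩ O).card = 2 * q + 1 := by
  rw [double_count, ← Finset.add_sum_erase _ _ hp]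
  have h1 : ((L.filter fun ℓ => p ∈ ℓ).filter fun ℓ => p ∈ ℓ).card = q + 1 := by
    rw [Finset.filter_filter]
    simpa using pencil_card hL p
  have h2 : ∀ c ∈ O.erase p,
      ((L.filter fun ℓ => p ∈ ℓ).filter fun ℓ => c ∈ ℓ).card = 1 := by
    intro c hc
    have hpc : p ≠ c := fun h => (Finset.mem_erase.mp hc).1 h.symm
    rw [Finset.filter_filter]
    exact card_filter_eq_one (by
      obtain ⟨ℓ, hℓ, hu⟩ := hL.exists_unique_line p c hpc
      exact ⟨ℓ, ⟨hℓ.1, hℓ.2.1, hℓ.2.2⟩, fun m hm => hu m ⟨hm.1, hm.2.1, hm.2.2⟩⟩)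
  rw [h1, Finset.sum_congr rfl h2, Finset.sum_const, smul_eq_mul, mul_one,
    Finset.card_erase_of_mem hp, hO.1]
  omega

lemma tangent_count_mem (hL : IsProjectivePlane q L) (hO : IsOval q L O) {p : P}
    (hp : p ∈ O) :
    (L.filter fun ℓ => p ∈ ℓ ∧ (ℓ ∩ O).card = 1).card = 1 := by
  set A := L.filter (fun ℓ => p ∈ ℓ) with hA
  have hbound : ∀ ℓ ∈ A, 1 ≤ (ℓ ∩ O).card ∧ (ℓ ∩ O).card ≤ 2 := by
    intro ℓ hℓ
    rw [hA, Finset.mem_filter] at hℓ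
    exact ⟨Finset.card_pos.mpr ⟨p, Finset.mem_inter.mpr ⟨hℓ.2, hp⟩⟩, hO.2 ℓ hℓ.1⟩
  have hsum : ∑ ℓ ∈ A, (ℓ ∩ O).card = 2 * q + 1 := sum_pencil_mem hL hO hp
  have hcardA : A.card = q + 1 := pencil_card hL p
  have hpart : (A.filter fun ℓ => (ℓ ∩ O).card = 1).card
      + (A.filter fun ℓ => ¬ (ℓ ∩ O).card = 1).card = A.card :=
    Finset.card_filter_add_card_filter_not _
  have hfe : A.filter (fun ℓ => ¬ (ℓ ∩ O).card = 1)
      = A.filter (fun ℓ => (ℓ ∩ O).card = 2) := by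
    apply Finset.filter_congr
    intro ℓ hℓ
    have := hbound ℓ hℓ
    constructor <;> intro h <;> omega
  have hsplit : ∑ ℓ ∈ A, (ℓ ∩ O).card
      = ∑ ℓ ∈ A.filter (fun ℓ => (ℓ ∩ O).card = 1), (ℓ ∩ O).card
      + ∑ ℓ ∈ A.filter (fun ℓ => ¬ (ℓ ∩ O).card = 1), (ℓ ∩ O).card :=
    (Finset.sum_filter_add_sum_filter_not _ _ _).symm
  have e1 : ∑ ℓ ∈ A.filter (fun ℓ => (ℓ ∩ O).card = 1), (ℓ ∩ O).card
      = (A.filter fun ℓ => (ℓ ∩ O).card = 1).card := by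
    rw [Finset.card_eq_sum_ones]
    exact Finset.sum_congr rfl (fun ℓ hℓ => (Finset.mem_filter.mp hℓ).2)
  have e2 : ∑ ℓ ∈ A.filter (fun ℓ => ¬ (ℓ ∩ O).card = 1), (ℓ ∩ O).card
      = 2 * (A.filter fun ℓ => ¬ (ℓ ∩ O).card = 1).card := by
    rw [hfe, Finset.card_eq_sum_ones, Finset.mul_sum]
    exact Finset.sum_congr rfl (fun ℓ hℓ => by
      rw [(Finset.mem_filter.mp hℓ).2]; ring)
  have hgoal : (L.filter fun ℓ => p ∈ ℓ ∧ (ℓ ∩ O).card = 1)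
      = A.filter fun ℓ => (ℓ ∩ O).card = 1 := by
    rw [hA, Finset.filter_filter]
  rw [hgoal]
  omega

lemma tangent_card_total (hL : IsProjectivePlane q L) (hO : IsOval q L O) :
    (L.filter fun ℓ => (ℓ ∩ O).card = 1).card = q + 1 := by
  set T := L.filter (fun ℓ => (ℓ ∩ O).card = 1) with hT
  have h1 : ∑ ℓ ∈ T, (ℓ ∩ O).card = T.card := by
    rw [Finset.card_eq_sum_ones]
    exact Finset.sum_congr rfl (fun ℓ hℓ => (Finset.mem_filter.mp hℓ).2)
  have h2 : ∀ c ∈ O, (T.filter fun ℓ => c ∈ ℓ).card = 1 := by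
    intro c hc
    have : T.filter (fun ℓ => c ∈ ℓ)
        = L.filter (fun ℓ => c ∈ ℓ ∧ (ℓ ∩ O).card = 1) := by
      rw [hT, Finset.filter_filter]
      exact Finset.filter_congr (fun ℓ _ => by tauto)
    rw [this]
    exact tangent_count_mem hL hO hc
  have := double_count T O
  rw [h1, Finset.sum_congr rfl h2, Finset.sum_const, smul_eq_mul, mul_one, hO.1] at this
  exact this

end Aux

/-- A projective bundle: a set of `q² + q + 1` ovals, any two of which meet in
exactly one point. -/
def IsProjectiveBundle (q : ℕ) {P : Type} [DecidableEq P] (L : Finset (Finset P))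
    (B : Finset (Finset P)) : Prop :=
  B.card = q ^ 2 + q + 1 ∧ (∀ o ∈ B, IsOval q L o) ∧
    ∀ o₁ ∈ B, ∀ o₂ ∈ B, o₁ ≠ o₂ → (o₁ ∩ o₂).card = 1

/-- In a finite projective plane of odd order `q ≥ 2`, every point not on an
oval `O` lies on exactly 0 or exactly 2 tangent lines of `O`. -/
theorem statement_5 (q : ℕ) (hq : 2 ≤ q) (hodd : Odd q) (P : Type) [Fintype P] [DecidableEq P]
    (L : Finset (Finset P)) (hL : IsProjectivePlane q L)
    (O : Finset P) (hO : IsOval q L O) (Q : P) (hQ : Q ∉ O) :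
    (L.filter fun ℓ => Q ∈ ℓ ∧ (ℓ ∩ O).card = 1).card = 0 ∨
    (L.filter fun ℓ => Q ∈ ℓ ∧ (ℓ ∩ O).card = 1).card = 2 := by
  by_cases h0 : (L.filter fun ℓ => Q ∈ ℓ ∧ (ℓ ∩ O).card = 1).card = 0
  · exact Or.inl h0
  right
  obtain ⟨m, hm⟩ := Finset.card_pos.mp (Nat.pos_of_ne_zero h0)
  rw [Finset.mem_filter] at hm
  obtain ⟨hmL, hQm, hm1⟩ := hm
  set T := L.filter (fun ℓ => (ℓ ∩ O).card = 1) with hT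
  have hmT : m ∈ T := Finset.mem_filter.mpr ⟨hmL, hm1⟩
  have hTcard : T.card = q + 1 := tangent_card_total hL hO
  set D := m.filter (fun x => x ∉ O) with hD
  have hQD : Q ∈ D := Finset.mem_filter.mpr ⟨hQm, hQ⟩
  have hDm : D ⊆ m := Finset.filter_subset _ _
  have hDcard : D.card = q := by
    have h1 := Finset.card_filter_add_card_filter_not (s := m)
      (p := fun x => x ∉ O)
    have h2 : (m.filter fun x => ¬ x ∉ O) = m ∩ O := by
      rw [← Finset.filter_mem_eq_inter]
      exact Finset.filter_congr (fun x _ => by tauto)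
    rw [h2, hm1, hL.card_line m hmL] at h1
    rw [hD]
    omega
  -- t x as a filter of T
  have htfilter : ∀ x : P, (L.filter fun ℓ => x ∈ ℓ ∧ (ℓ ∩ O).card = 1)
      = T.filter fun ℓ => x ∈ ℓ := by
    intro x
    rw [hT, Finset.filter_filter]
    exact Finset.filter_congr (fun ℓ _ => by tauto)
  -- each tangent other than m meets D in exactly one point
  have hmeet : ∀ ℓ ∈ T.erase m, (ℓ ∩ D).card = 1 := by
    intro ℓ hℓ
    obtain ⟨hℓne, hℓT⟩ := Finset.mem_erase.mp hℓ
    obtain ⟨hℓL, hℓ1⟩ := Finset.mem_filter.mp hℓT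
    obtain ⟨z, ⟨hzℓ, hzm⟩, hu⟩ := hL.exists_unique_point ℓ hℓL m hmL hℓne
    have hzO : z ∉ O := by
      intro hzO
      have hcount := tangent_count_mem hL hO hzO
      have h1 : ℓ ∈ L.filter fun l => z ∈ l ∧ (l ∩ O).card = 1 :=
        Finset.mem_filter.mpr ⟨hℓL, hzℓ, hℓ1⟩
      have h2 : m ∈ L.filter fun l => z ∈ l ∧ (l ∩ O).card = 1 :=
        Finset.mem_filter.mpr ⟨hmL, hzm, hm1⟩
      exact hℓne (Finset.card_le_one.mp hcount.le ℓ h1 m h2)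
    refine inter_card_one ⟨z, ⟨hzℓ, Finset.mem_filter.mpr ⟨hzm, hzO⟩⟩, ?_⟩
    rintro w ⟨hwℓ, hwD⟩
    exact hu w ⟨hwℓ, hDm hwD⟩
  -- total incidence count
  have hsum : ∑ x ∈ D, (T.filter fun ℓ => x ∈ ℓ).card = 2 * q := by
    rw [← double_count, ← Finset.add_sum_erase _ _ hmT]
    have hmD : (m ∩ D).card = q := by
      rw [Finset.inter_eq_right.mpr hDm, hDcard]
    rw [hmD, Finset.sum_congr rfl hmeet, Finset.sum_const, smul_eq_mul, mul_one,
      Finset.card_erase_of_mem hmT, hTcard]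
    omega
  have hle : ∀ x ∈ D, 2 ≤ (T.filter fun ℓ => x ∈ ℓ).card := by
    intro x hx
    obtain ⟨hxm, hxO⟩ := Finset.mem_filter.mp hx
    have hpos : 0 < (T.filter fun ℓ => x ∈ ℓ).card :=
      Finset.card_pos.mpr ⟨m, Finset.mem_filter.mpr ⟨hmT, hxm⟩⟩
    have heven := tangents_even hL hO hodd hxO
    rw [htfilter x] at heven
    omega
  have hall : ∀ x ∈ D, (2 : ℕ) = (T.filter fun ℓ => x ∈ ℓ).card := by
    have h2q : ∑ _x ∈ D, (2 : ℕ) = 2 * q := by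
      rw [Finset.sum_const, hDcard, smul_eq_mul]; ring
    exact (Finset.sum_eq_sum_iff_of_le hle).mp (by rw [h2q, hsum])
  rw [htfilter Q]
  exact (hall Q hQD).symm
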